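/- Assume q ≥ 4. For every a ∈ F_q*, the Hamming weight of the vector c_1(a) = (tr(a·γ_1^{-1}), ..., tr(a·γ_{q/2−1}^{-1}), tr(a·γ_1^{-1}), ..., tr(a·γ_{q/2−1}^{-1})) ∈ F_2^{q−2} equals (q − 1 − K(a))/2. -/

import Mathlib

open Finset

/-- The trace map `tr : F_q → F_2 ⊆ F_q`, `tr x = x + x² + ⋯ + x^(2^(r-1))`. -/
def trF {F : Type*} [Field F] (r : ℕ) (x : F) : F :=
  ∑ i ∈ Finset.range r, x ^ (2 ^ i)

/-- The trace map with values in `F_2 = ZMod 2` (the value of `trF` is always `0` or `1`). -/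
def tr2 {F : Type*} [Field F] [DecidableEq F] (r : ℕ) (x : F) : ZMod 2 :=
  if trF r x = 0 then 0 else 1

/-- The canonical additive character `λ(x) = (-1)^(tr x) ∈ ℤ` of `F_q`. -/
def lamF {F : Type*} [Field F] [DecidableEq F] (r : ℕ) (x : F) : ℤ :=
  if trF r x = 0 then 1 else -1

/-- The Kloosterman sum `K(a) = ∑_{α ∈ F_q*} λ(α + a·α⁻¹)`. -/
def Kloos {F : Type*} [Field F] [Fintype F] [DecidableEq F] (r : ℕ) (a : F) : ℤ :=
  ∑ α ∈ Finset.univ.filter (fun α : F => α ≠ 0), lamF r (α + a * α⁻¹)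

/-- The Hamming weight of a vector over `F_2`: the number of nonzero coordinates. -/
def wt {n : ℕ} (u : Fin n → ZMod 2) : ℕ :=
  (Finset.univ.filter (fun l => u l ≠ 0)).card

/-- The vector `(g_1⁻¹, …, g_m⁻¹, g_1⁻¹, …, g_m⁻¹) ∈ F_q^n`, where `n = m + m`. -/
def doubledInvVec {F : Type*} [Field F] {m n : ℕ} (g : Fin m → F) (hN : n = m + m) :
    Fin n → F :=
  fun l => (Fin.append g g (Fin.cast hN l))⁻¹

/-- The codeword map `a ↦ (tr(a·v_1), …, tr(a·v_n)) ∈ F_2^n`. -/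
def cw {F : Type*} [Field F] [DecidableEq F] (r : ℕ) {n : ℕ} (v : Fin n → F) (a : F) :
    Fin n → ZMod 2 :=
  fun l => tr2 r (a * v l)

section Aux
open Polynomial
variable {F : Type*} [Field F]

lemma trF_zero (r : ℕ) : trF r (0 : F) = 0 := by
  unfold trF
  exact Finset.sum_eq_zero fun i _ => zero_pow (by positivity)

lemma trF_add [CharP F 2] (r : ℕ) (x y : F) :
    trF r (x + y) = trF r x + trF r y := by
  haveI := Fact.mk Nat.prime_two
  unfold trF
  rw [← Finset.sum_add_distrib]
  exact Finset.sum_congr rfl fun i _ => add_pow_char_pow x y 2 i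

lemma trF_sq [Fintype F] {r : ℕ} (hF : Fintype.card F = 2 ^ r) (x : F) :
    trF r (x ^ 2) = trF r x := by
  have hx : x ^ (2 ^ r) = x := by rw [← hF]; exact FiniteField.pow_card x
  have h1 : ∀ i : ℕ, (x ^ 2) ^ (2 ^ i) = x ^ (2 ^ (i + 1)) := by
    intro i; rw [← pow_mul]; congr 1; ring
  unfold trF
  calc ∑ i ∈ Finset.range r, (x ^ 2) ^ (2 ^ i)
      = ∑ i ∈ Finset.range r, x ^ (2 ^ (i + 1)) :=
        Finset.sum_congr rfl fun i _ => h1 i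
    _ = (∑ i ∈ Finset.range (r + 1), x ^ (2 ^ i)) - x ^ (2 ^ 0) := by
        rw [Finset.sum_range_succ']; ring
    _ = (∑ i ∈ Finset.range r, x ^ (2 ^ i)) + x ^ (2 ^ r) - x := by
        rw [Finset.sum_range_succ]; norm_num
    _ = ∑ i ∈ Finset.range r, x ^ (2 ^ i) := by rw [hx]; ring

lemma trF_sq_self [CharP F 2] (r : ℕ) (x : F) :
    (trF r x) ^ 2 = trF r (x ^ 2) := by
  haveI := Fact.mk Nat.prime_two
  unfold trF
  rw [show (∑ i ∈ Finset.range r, x ^ 2 ^ i) ^ 2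
      = frobenius F 2 (∑ i ∈ Finset.range r, x ^ 2 ^ i) from rfl, map_sum]
  exact Finset.sum_congr rfl fun i _ => by
    rw [show frobenius F 2 (x ^ 2 ^ i) = (x ^ 2 ^ i) ^ 2 from rfl,
      ← pow_mul, ← pow_mul, mul_comm]

lemma trF_val [Fintype F] [CharP F 2] {r : ℕ} (hF : Fintype.card F = 2 ^ r) (x : F) :
    trF r x = 0 ∨ trF r x = 1 := by
  have h : (trF r x) ^ 2 = trF r x := by rw [trF_sq_self, trF_sq hF]
  have h2 : trF r x * (trF r x - 1) = 0 := by linear_combination h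
  rcases mul_eq_zero.mp h2 with h' | h'
  · exact Or.inl h'
  · exact Or.inr (by linear_combination h')

lemma char_two_of_card {F : Type*} [Field F] [Fintype F] {r : ℕ} (hr : 0 < r)
    (hF : Fintype.card F = 2 ^ r) : CharP F 2 := by
  obtain ⟨p, hchar⟩ := CharP.exists F
  haveI := hchar
  have hp : p.Prime := CharP.char_is_prime F p
  haveI := Fact.mk hp
  obtain ⟨n, hn⟩ := FiniteField.card F p
  have hdvd : p ∣ 2 ^ r := by
    rw [← hF, hn.2]
    exact dvd_pow_self p (by exact_mod_cast n.pos.ne')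
  have hp2 : p = 2 :=
    (Nat.prime_dvd_prime_iff_eq hp Nat.prime_two).mp (hp.dvd_of_dvd_pow hdvd)
  exact hp2 ▸ hchar

lemma key_sets {F : Type*} [Field F] [Fintype F] [DecidableEq F] [CharP F 2]
    {r : ℕ} (hr : 0 < r) (hF : Fintype.card F = 2 ^ r) :
    (Finset.univ.filter fun x : F => trF r x = 0).card = 2 ^ (r - 1) ∧
    ∀ β : F, (∃ α : F, β = α ^ 2 + α) ↔ trF r β = 0 := by
  haveI := Fact.mk Nat.prime_two
  have h2 : (2 : F) = 0 := by exact_mod_cast CharP.cast_eq_zero F 2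
  set K : Finset F := Finset.univ.filter fun x => trF r x = 0 with hK
  set B : Finset F := Finset.univ.image fun α : F => α ^ 2 + α with hB
  have hBK : B ⊆ K := by
    intro β hβ
    simp only [hB, Finset.mem_image, Finset.mem_univ, true_and] at hβ
    obtain ⟨α, rfl⟩ := hβ
    simp only [hK, Finset.mem_filter, Finset.mem_univ, true_and]
    rw [trF_add, trF_sq hF]
    linear_combination (trF r α) * h2
  -- upper bound on K via polynomial roots
  have hKle : K.card ≤ 2 ^ (r - 1) := by
    set P : Polynomial F := ∑ i ∈ Finset.range r, Polynomial.X ^ (2 ^ i) with hP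
    have hdeg : P.natDegree ≤ 2 ^ (r - 1) := by
      apply Polynomial.natDegree_sum_le_of_forall_le
      intro i hi
      have hi' := Finset.mem_range.mp hi
      rw [Polynomial.natDegree_X_pow]
      exact Nat.pow_le_pow_right (by norm_num) (by omega)
    have hPne : P ≠ 0 := by
      intro h
      have hc : P.coeff (2 ^ (r - 1)) = 1 := by
        rw [hP, Polynomial.finset_sum_coeff]
        rw [Finset.sum_eq_single (r - 1)]
        · rw [Polynomial.coeff_X_pow, if_pos rfl]
        · intro i hi hne
          rw [Polynomial.coeff_X_pow, if_neg]
          intro heq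
          exact hne (Nat.pow_right_injective le_rfl heq.symm)
        · intro habs
          exact absurd (Finset.mem_range.mpr (by omega)) habs
      rw [h] at hc
      simp at hc
    have heval : ∀ x ∈ K, P.IsRoot x := by
      intro x hx
      have hx0 := (Finset.mem_filter.mp hx).2
      simp only [Polynomial.IsRoot, hP, Polynomial.eval_finset_sum,
        Polynomial.eval_pow, Polynomial.eval_X]
      exact hx0
    calc K.card ≤ P.roots.toFinset.card := by
          apply Finset.card_le_card
          intro x hx
          exact Multiset.mem_toFinset.mpr
            (Polynomial.mem_roots'.mpr ⟨hPne, heval x hx⟩)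
      _ ≤ Multiset.card P.roots := P.roots.toFinset_card_le
      _ ≤ P.natDegree := Polynomial.card_roots' P
      _ ≤ 2 ^ (r - 1) := hdeg
  -- fibers of Artin-Schreier
  have hfib : ∀ α0 : F, (Finset.univ.filter fun α : F => α ^ 2 + α = α0 ^ 2 + α0)
      = {α0, α0 + 1} := by
    intro α0
    ext α
    simp only [Finset.mem_filter, Finset.mem_univ, true_and, Finset.mem_insert,
      Finset.mem_singleton]
    constructor
    · intro h
      have hz : (α - α0) * (α + α0 + 1) = 0 := by linear_combination h
      rcases mul_eq_zero.mp hz with h' | h'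
      · exact Or.inl (sub_eq_zero.mp h')
      · exact Or.inr (by linear_combination h' - (α0 + 1) * h2)
    · rintro (rfl | rfl)
      · rfl
      · linear_combination (α0 + 1) * h2
  have hone : ∀ α0 : F, α0 ≠ α0 + 1 := by
    intro α0 h
    have : (1 : F) = 0 := by linear_combination -h
    exact one_ne_zero this
  have hBcard2 : 2 * B.card = 2 ^ r := by
    have hcu := Finset.card_eq_sum_card_image (fun α : F => α ^ 2 + α) Finset.univ
    rw [Finset.card_univ, hF] at hcu
    have hfib2 : ∀ b ∈ B, (Finset.univ.filter fun α : F => α ^ 2 + α = b).card = 2 := by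
      intro b hb
      obtain ⟨α0, -, rfl⟩ := Finset.mem_image.mp hb
      rw [hfib α0, Finset.card_insert_of_notMem (by simp [hone α0]),
        Finset.card_singleton]
    rw [hcu, Finset.sum_congr rfl hfib2, Finset.sum_const, smul_eq_mul, mul_comm]
  have hpow : 2 ^ r = 2 * 2 ^ (r - 1) := by
    cases r with
    | zero => omega
    | succ r' => simp [pow_succ, mul_comm, Nat.succ_sub_one]
  have hBcard : B.card = 2 ^ (r - 1) := by omega
  have hKcard : K.card = 2 ^ (r - 1) :=
    le_antisymm hKle (hBcard ▸ Finset.card_le_card hBK)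
  have hBKeq : B = K := Finset.eq_of_subset_of_card_le hBK (by rw [hKcard, hBcard])
  refine ⟨hKcard, fun β => ?_⟩
  constructor
  · rintro ⟨α, rfl⟩
    have : α ^ 2 + α ∈ K := hBK (Finset.mem_image.mpr ⟨α, Finset.mem_univ α, rfl⟩)
    exact (Finset.mem_filter.mp this).2
  · intro hβ
    have : β ∈ B := hBKeq ▸ (Finset.mem_filter.mpr ⟨Finset.mem_univ β, hβ⟩)
    obtain ⟨α, -, hα⟩ := Finset.mem_image.mp this
    exact ⟨α, hα.symm⟩

end Aux


/-- For `q ≥ 4` and every `a ∈ F_q*`, the Hamming weight of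
`c_1(a) = (tr(a·γ_1⁻¹), …, tr(a·γ_{q/2−1}⁻¹), tr(a·γ_1⁻¹), …, tr(a·γ_{q/2−1}⁻¹)) ∈ F_2^(q−2)`
equals `(q − 1 − K(a))/2`, where `γ_1, …, γ_{q/2−1}` enumerate the nonzero elements of
`Θ(F_q) = {α² + α : α ∈ F_q}`. -/
theorem weight_c1 {F : Type*} [Field F] [Fintype F] [DecidableEq F]
    (r : ℕ) (hr : 0 < r) (hq : 4 ≤ 2 ^ r) (hF : Fintype.card F = 2 ^ r)
    (γ : Fin (2 ^ (r - 1) - 1) → F) (hγinj : Function.Injective γ)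
    (hγran : Set.range γ = {β : F | β ≠ 0 ∧ ∃ α : F, β = α ^ 2 + α})
    (hN : 2 ^ r - 2 = (2 ^ (r - 1) - 1) + (2 ^ (r - 1) - 1))
    (a : F) (ha : a ≠ 0) :
    (wt (cw r (doubledInvVec γ hN) a) : ℚ)
      = ((2 ^ r : ℚ) - 1 - (Kloos r a : ℚ)) / 2 := by
  haveI hp2 : CharP F 2 := char_two_of_card hr hF
  haveI := Fact.mk Nat.prime_two
  obtain ⟨hker, hAS⟩ := key_sets hr hF (F := F)
  set S : Finset F := Finset.univ.filter (fun α : F => α ≠ 0) with hS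
  set n01 : Finset F := Finset.univ.filter
    (fun β : F => β ≠ 0 ∧ trF r β = 0 ∧ trF r (a * β⁻¹) ≠ 0) with hn01
  -- step 1 : weight = 2 * Z
  have htr2 : ∀ x : F, (tr2 r x ≠ 0) ↔ trF r x ≠ 0 := by
    intro x; unfold tr2; split_ifs with h <;> simp [h]
  have hwt : wt (cw r (doubledInvVec γ hN) a)
      = 2 * (Finset.univ.filter fun j : Fin (2 ^ (r - 1) - 1) => trF r (a * (γ j)⁻¹) ≠ 0).card := by
    unfold wt
    rw [Finset.card_filter]
    rw [Fintype.sum_equiv (finCongr hN)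
      (fun l => if cw r (doubledInvVec γ hN) a l ≠ 0 then 1 else 0)
      (fun l => if trF r (a * (Fin.append γ γ l)⁻¹) ≠ 0 then 1 else 0)
      (fun l => by
        simp only [cw, doubledInvVec, htr2]
        rfl)]
    rw [Fin.sum_univ_add]
    simp only [Fin.append_left, Fin.append_right]
    rw [← Finset.card_filter, two_mul]
  -- step 2 : Z = n01.card
  have hZ : (Finset.univ.filter fun j : Fin (2 ^ (r - 1) - 1) => trF r (a * (γ j)⁻¹) ≠ 0).card
      = n01.card := by
    apply Finset.card_nbij γ
    · intro j hj
      have hjr : γ j ∈ Set.range γ := ⟨j, rfl⟩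
      rw [hγran] at hjr
      obtain ⟨hne, hex⟩ := hjr
      simp only [hn01, Finset.mem_filter, Finset.mem_univ, true_and]
      exact Finset.mem_filter.mpr ⟨Finset.mem_univ _, hne, (hAS (γ j)).mp hex, (Finset.mem_filter.mp hj).2⟩
    · exact Function.Injective.injOn hγinj
    · intro β hβ
      simp only [Finset.coe_filter, Finset.mem_univ, true_and, Set.mem_setOf_eq,
        hn01, Finset.mem_filter] at hβ
      obtain ⟨hne, htr, hv⟩ := hβ
      have : β ∈ Set.range γ := by
        rw [hγran]; exact ⟨hne, (hAS β).mpr htr⟩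
      obtain ⟨j, rfl⟩ := this
      refine ⟨j, ?_, rfl⟩
      simp only [Finset.coe_filter, Finset.mem_univ, true_and, Set.mem_setOf_eq]
      exact hv
  -- step 3 : Kloosterman identity
  have hScard : S.card = 2 ^ r - 1 := by
    rw [hS, Finset.filter_ne', Finset.card_erase_of_mem (Finset.mem_univ 0),
      Finset.card_univ, hF]
  have hone : (1 : F) + 1 = 0 := by
    have h2 : (2 : F) = 0 := by exact_mod_cast CharP.cast_eq_zero F 2
    linear_combination h2
  have hpt : ∀ α ∈ S, lamF r (α + a * α⁻¹) =
      1 - 2 * (if trF r α ≠ 0 then (1 : ℤ) else 0)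
        - 2 * (if trF r (a * α⁻¹) ≠ 0 then (1 : ℤ) else 0)
        + 4 * (if trF r α ≠ 0 ∧ trF r (a * α⁻¹) ≠ 0 then (1 : ℤ) else 0) := by
    intro α _
    have hadd : trF r (α + a * α⁻¹) = trF r α + trF r (a * α⁻¹) := trF_add r _ _
    unfold lamF
    rcases trF_val hF α with h1 | h1 <;> rcases trF_val hF (a * α⁻¹) with h2 | h2 <;>
      simp [hadd, h1, h2, hone] <;> norm_num
  have hKsum : Kloos r a = (S.card : ℤ)
      - 2 * ((S.filter fun α => trF r α ≠ 0).card : ℤ)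
      - 2 * ((S.filter fun α => trF r (a * α⁻¹) ≠ 0).card : ℤ)
      + 4 * ((S.filter fun α => trF r α ≠ 0 ∧ trF r (a * α⁻¹) ≠ 0).card : ℤ) := by
    unfold Kloos
    rw [← hS, Finset.sum_congr rfl hpt]
    rw [Finset.sum_add_distrib, Finset.sum_sub_distrib, Finset.sum_sub_distrib,
      ← Finset.mul_sum, ← Finset.mul_sum, ← Finset.mul_sum,
      Finset.sum_boole, Finset.sum_boole, Finset.sum_boole, Finset.sum_const]
    simp
  set A := (S.filter fun α => trF r α ≠ 0).card with hA
  set B := (S.filter fun α => trF r (a * α⁻¹) ≠ 0).card with hB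
  set C := (S.filter fun α => trF r α ≠ 0 ∧ trF r (a * α⁻¹) ≠ 0).card with hC
  -- A = 2^(r-1)
  have hpow : 2 ^ r = 2 * 2 ^ (r - 1) := by
    cases r with
    | zero => omega
    | succ r' => simp [pow_succ, mul_comm, Nat.succ_sub_one]
  have hAval : A = 2 ^ (r - 1) := by
    have hfe : S.filter (fun α => trF r α ≠ 0)
        = Finset.univ.filter (fun α : F => ¬ trF r α = 0) := by
      ext α
      simp only [hS, Finset.mem_filter, Finset.mem_univ, true_and, ne_eq]
      constructor
      · tauto
      · intro hp
        exact ⟨fun h => hp (by rw [h]; exact trF_zero r), hp⟩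
    have := Finset.card_filter_add_card_filter_not
      (s := (Finset.univ : Finset F)) (fun x : F => trF r x = 0)
    rw [Finset.card_univ, hF, hker] at this
    rw [hA, hfe]
    omega
  -- B = A
  have hinva : ∀ β : F, β ≠ 0 → a * (a * β⁻¹)⁻¹ = β := by
    intro β hβ; field_simp
  have hBA : B = A := by
    rw [hB, hA]
    apply Finset.card_bij' (fun α _ => a * α⁻¹) (fun β _ => a * β⁻¹)
    · intro α hα
      simp only [hS, Finset.mem_filter, Finset.mem_univ, true_and, ne_eq] at hα ⊢
      obtain ⟨hα0, hv⟩ := hα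
      exact ⟨mul_ne_zero ha (inv_ne_zero hα0), hv⟩
    · intro β hβ
      simp only [hS, Finset.mem_filter, Finset.mem_univ, true_and, ne_eq] at hβ ⊢
      obtain ⟨hβ0, hv⟩ := hβ
      refine ⟨mul_ne_zero ha (inv_ne_zero hβ0), ?_⟩
      rw [hinva β hβ0]
      exact hv
    · intro α hα
      exact hinva α (Finset.mem_filter.mp (Finset.mem_filter.mp hα).1).2
    · intro β hβ
      exact hinva β (Finset.mem_filter.mp (Finset.mem_filter.mp hβ).1).2
  -- B = n01.card + C
  have hsplit : B = n01.card + C := by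
    have hpart := Finset.card_filter_add_card_filter_not
      (s := S.filter fun α => trF r (a * α⁻¹) ≠ 0) (fun α : F => trF r α = 0)
    have e1 : (S.filter fun α => trF r (a * α⁻¹) ≠ 0).filter (fun α => trF r α = 0)
        = n01 := by
      ext α
      simp only [hS, hn01, Finset.mem_filter, Finset.mem_univ, true_and, ne_eq]
      tauto
    have e2 : (S.filter fun α => trF r (a * α⁻¹) ≠ 0).filter (fun α => ¬ trF r α = 0)
        = S.filter fun α => trF r α ≠ 0 ∧ trF r (a * α⁻¹) ≠ 0 := by
      ext α
      simp only [hS, Finset.mem_filter, Finset.mem_univ, true_and, ne_eq]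
      tauto
    rw [e1, e2] at hpart
    rw [hB, hC, ← hpart]
  -- assemble
  have hKval : Kloos r a = (2 ^ r : ℤ) - 1 - 4 * (n01.card : ℤ) := by
    rw [hKsum]
    have hScast : (S.card : ℤ) = 2 ^ r - 1 := by
      rw [hScard]
      have h1 : (1 : ℕ) ≤ 2 ^ r := Nat.one_le_two_pow
      push_cast [Nat.cast_sub h1]
      ring
    rw [hScast]
    have h1 : (B : ℤ) = (n01.card : ℤ) + C := by exact_mod_cast hsplit
    have h2 : (A : ℤ) = (B : ℤ) := by exact_mod_cast hBA.symm
    linarith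
  rw [hwt, hZ, hKval]
  push_cast
  ring
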